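/- arXiv:1105.1764 — 2 statements merged into one kernel-verified Lean document; each statement's English description precedes it below -/
import Mathlib

section
/- Let H be a 1-extendable graph and let G ∈ ℰ(H) be a supergraph of H on the same vertex set with Φ(G) = Φ(H). Then every barrier of G is also a barrier of H. -/
open SimpleGraph

variable {V : Type}

/-- The number of perfect matchings of a simple graph. -/
noncomputable def numPM (G : SimpleGraph V) : ℕ :=
  Nat.card {M : G.Subgraph // M.IsPerfectMatching}

/-- An edge, given by its two endpoints, is extendable if it lies in some perfect matching. -/
def IsExtendableEdge (G : SimpleGraph V) (u v : V) : Prop :=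
  ∃ M : G.Subgraph, M.IsPerfectMatching ∧ M.Adj u v

/-- A connected graph is 1-extendable if it has a perfect matching and every edge is
extendable. -/
def OneExtendable (G : SimpleGraph V) : Prop :=
  G.Connected ∧ (∃ M : G.Subgraph, M.IsPerfectMatching) ∧
    ∀ ⦃u v : V⦄, G.Adj u v → IsExtendableEdge G u v

/-- The number of connected components of `G - S` with an odd number of vertices. -/
noncomputable def oddComponentCount (G : SimpleGraph V) (S : Set V) : ℕ :=
  Nat.card {c : (G.induce (Sᶜ : Set V)).ConnectedComponent // Odd (Nat.card c.supp)}

/-- `S` is a barrier of `G` if the number of odd components of `G - S` equals `|S|`. -/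
def IsBarrier (G : SimpleGraph V) (S : Set V) : Prop :=
  oddComponentCount G S = S.ncard

/-- A maximal barrier is a barrier not properly contained in any other barrier. -/
def IsMaximalBarrier (G : SimpleGraph V) (S : Set V) : Prop :=
  IsBarrier G S ∧ ∀ T : Set V, IsBarrier G T → S ⊆ T → T = S

/-- `ℰ(H)`: the supergraphs of `H` on the same vertex set with the same number of
perfect matchings. -/
def elemSupergraphs (H : SimpleGraph V) : Set (SimpleGraph V) :=
  {G | H ≤ G ∧ numPM G = numPM H}

/-- The excess of a graph: `e(G) - n(G)^2/4`. -/
noncomputable def excess (G : SimpleGraph V) : ℚ :=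
  (G.edgeSet.ncard : ℚ) - (Nat.card V : ℚ) ^ 2 / 4

/-- The spanning subgraph of `G` consisting of the free (non-extendable) edges. -/
def freeSubgraph (G : SimpleGraph V) : SimpleGraph V where
  Adj u v := G.Adj u v ∧ ¬ IsExtendableEdge G u v
  symm := by
    constructor
    intro u v h
    refine ⟨h.1.symm, fun hc => h.2 ?_⟩
    obtain ⟨M, hM, hadj⟩ := hc
    exact ⟨M, hM, hadj.symm⟩
  loopless := ⟨fun v h => G.irrefl h.1⟩

/-- The graph obtained from `H` by simultaneously augmenting `m` ears; the `j`-th ear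
joins `x j` to `y j` and has `ℓ j` internal vertices (its order). -/
def earsAugment (H : SimpleGraph V) (m : ℕ) (x y : Fin m → V) (ℓ : Fin m → ℕ) :
    SimpleGraph (V ⊕ (Σ j : Fin m, Fin (ℓ j))) :=
  SimpleGraph.fromRel fun a b =>
    match a, b with
    | Sum.inl u, Sum.inl v => H.Adj u v ∨ ∃ j, ℓ j = 0 ∧ u = x j ∧ v = y j
    | Sum.inl u, Sum.inr ⟨j, i⟩ => u = x j ∧ (i : ℕ) = 0
    | Sum.inr ⟨j, i⟩, Sum.inl u => u = y j ∧ (i : ℕ) + 1 = ℓ j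
    | Sum.inr ⟨j, i⟩, Sum.inr ⟨j', i'⟩ => j = j' ∧ (i : ℕ) + 1 = (i' : ℕ)

/-- Validity conditions for a system of (even-order) ears attached to `H`:
distinct endpoints, even orders, trivial ears are new edges, and distinct trivial ears
are distinct edges. -/
def IsEarSystem (H : SimpleGraph V) (m : ℕ) (x y : Fin m → V) (ℓ : Fin m → ℕ) : Prop :=
  (∀ j, x j ≠ y j) ∧ (∀ j, Even (ℓ j)) ∧
  (∀ j, ℓ j = 0 → ¬ H.Adj (x j) (y j)) ∧
  (∀ j j', j ≠ j' → ℓ j = 0 → ℓ j' = 0 → s(x j, y j) ≠ s(x j', y j'))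

/-- A single-ear augmentation of `H` by an ear from `a` to `b` with `l` internal
vertices. -/
def singleEar (H : SimpleGraph V) (a b : V) (l : ℕ) :
    SimpleGraph (V ⊕ (Σ _ : Fin 1, Fin l)) :=
  earsAugment H 1 (fun _ => a) (fun _ => b) (fun _ => l)

/-- `B` meets more than one connected component of `H - S`. -/
def MeetsMultipleComponents (H : SimpleGraph V) (S B : Set V) : Prop :=
  ∃ c₁ c₂ : (H.induce (Sᶜ : Set V)).ConnectedComponent, c₁ ≠ c₂ ∧
    (∃ v ∈ c₁.supp, (v : V) ∈ B) ∧ (∃ v ∈ c₂.supp, (v : V) ∈ B)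

/-- Two barriers conflict if they intersect, or one meets more than one component of the
graph minus the other. -/
def BarriersConflict (H : SimpleGraph V) (B₁ B₂ : Set V) : Prop :=
  (B₁ ∩ B₂).Nonempty ∨ MeetsMultipleComponents H B₂ B₁ ∨ MeetsMultipleComponents H B₁ B₂

/-- A cover set of `H`: a partition of `V(H)` into pairwise non-conflicting nonempty
barriers. -/
def IsCoverSet (H : SimpleGraph V) (I : Set (Set V)) : Prop :=
  (∀ B ∈ I, B.Nonempty ∧ IsBarrier H B) ∧
  (∀ B₁ ∈ I, ∀ B₂ ∈ I, B₁ ≠ B₂ → ¬ BarriersConflict H B₁ B₂) ∧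
  ∀ v : V, ∃! B, B ∈ I ∧ v ∈ B

/-- The order `𝓘₁ ⪯ 𝓘₂` on cover sets: every part of `𝓘₁` is contained in a part of
`𝓘₂`. -/
def CoverLE (I₁ I₂ : Set (Set V)) : Prop :=
  ∀ B₁ ∈ I₁, ∃ B₂ ∈ I₂, B₁ ⊆ B₂

/-- The graph `H_𝓘` obtained from `H` by adding all possible edges inside each part of
`𝓘`. -/
def fillGraph (H : SimpleGraph V) (I : Set (Set V)) : SimpleGraph V :=
  H ⊔ SimpleGraph.fromRel fun u v => ∃ B ∈ I, u ∈ B ∧ v ∈ B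

/-- The graph obtained from `H` by adding all possible edges inside the set `X`. -/
def fillSide (H : SimpleGraph V) (X : Set V) : SimpleGraph V :=
  H ⊔ SimpleGraph.fromRel fun u v => u ∈ X ∧ v ∈ X

/-- A (connected, 2-regular) cycle graph. -/
def IsCycleGraph (G : SimpleGraph V) : Prop :=
  G.Connected ∧ ∀ v : V, (G.neighborSet v).ncard = 2

/-- An ear of `H`: a path `f 0, f 1, ..., f k` whose endpoints have degree at least three
and whose internal vertices have degree exactly two. -/
def IsEar (H : SimpleGraph V) (k : ℕ) (f : Fin (k + 1) → V) : Prop :=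
  1 ≤ k ∧ Function.Injective f ∧
  (∀ i : Fin k, H.Adj (f i.castSucc) (f i.succ)) ∧
  3 ≤ (H.neighborSet (f 0)).ncard ∧
  3 ≤ (H.neighborSet (f (Fin.last k))).ncard ∧
  ∀ i : Fin (k + 1), i ≠ 0 → i ≠ Fin.last k → (H.neighborSet (f i)).ncard = 2

/-- The edge `uv` lies on the path `f 0, ..., f k`. -/
def EdgeOnPath (k : ℕ) (f : Fin (k + 1) → V) (u v : V) : Prop :=
  ∃ i : Fin k, (u = f i.castSucc ∧ v = f i.succ) ∨ (v = f i.castSucc ∧ u = f i.succ)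

/-- A graph is almost 1-extendable if it has a perfect matching and all of its free edges
lie on a single ear (the whole graph counting as an ear when it is a cycle). -/
def AlmostOneExtendable (G : SimpleGraph V) : Prop :=
  (∃ M : G.Subgraph, M.IsPerfectMatching) ∧
  (IsCycleGraph G ∨
    ∃ (k : ℕ) (f : Fin (k + 1) → V), IsEar G k f ∧
      ∀ u v : V, G.Adj u v → ¬ IsExtendableEdge G u v → EdgeOnPath k f u v)

/-- A graph with at least three vertices is 2-connected if no single vertex deletion
disconnects it. -/
def TwoConnected (G : SimpleGraph V) : Prop :=
  3 ≤ Nat.card V ∧ ∀ v : V, (G.induce ({v}ᶜ : Set V)).Connected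

/-- Membership in the class `𝓜ᵖ`: 2-connected graphs with between 2 and `p` perfect
matchings which are 1-extendable or almost 1-extendable. -/
def MemM (p : ℕ) (G : SimpleGraph V) : Prop :=
  TwoConnected G ∧ 2 ≤ numPM G ∧ numPM G ≤ p ∧
    (OneExtendable G ∨ AlmostOneExtendable G)

/-- `a` and `b` lie in different connected components of `H - B`. -/
def InDiffComponents (H : SimpleGraph V) (B : Set V) (a b : V) : Prop :=
  ∃ (ha : a ∈ (Bᶜ : Set V)) (hb : b ∈ (Bᶜ : Set V)),
    (H.induce (Bᶜ : Set V)).connectedComponentMk ⟨a, ha⟩ ≠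
      (H.induce (Bᶜ : Set V)).connectedComponentMk ⟨b, hb⟩

/-- The `a`-th vertex `x_a` along the `j`-th ear `x 0 = x_0, x_1, ..., x_{ℓ j}, x_{ℓ j + 1} = y j`. -/
def earVertex {m : ℕ} (x y : Fin m → V) (ℓ : Fin m → ℕ) (j : Fin m) (a : ℕ) :
    V ⊕ (Σ j : Fin m, Fin (ℓ j)) :=
  if h : 0 < a ∧ a ≤ ℓ j then Sum.inr ⟨j, ⟨a - 1, by omega⟩⟩
  else if a = 0 then Sum.inl (x j) else Sum.inl (y j)

/-- Non-refinability of a two-ear augmentation: neither single-ear augmentation is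
1-extendable. -/
def NonRefinableSystem (H : SimpleGraph V) (m : ℕ) (x y : Fin m → V) (ℓ : Fin m → ℕ) :
    Prop :=
  ∀ j : Fin m, m = 2 → ¬ OneExtendable (singleEar H (x j) (y j) (ℓ j))
private lemma aux_le_ncard [Finite V] {H : SimpleGraph V}
    {M : H.Subgraph} (hM : M.IsPerfectMatching) (B : Set V) :
    oddComponentCount H B ≤ B.ncard := by
  classical
  let φ : H.induce (Bᶜ : Set V) ≃g ((⊤ : H.Subgraph).deleteVerts B).coe :=
    { toEquiv := Equiv.setCongr (by ext v; simp)
      map_rel_iff' := by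
        intro a b
        simp only [Equiv.setCongr, Subgraph.coe_adj, Subgraph.deleteVerts_adj,
          Subgraph.verts_top, Set.mem_univ, Subgraph.top_adj, true_and, comap_adj,
          Function.Embedding.coe_subtype, Equiv.coe_fn_mk, Equiv.subtypeEquivProp]
        exact ⟨fun h => h.2.2, fun h => ⟨a.2, b.2, h⟩⟩ }
  have key : ∀ c : {c : ((⊤ : H.Subgraph).deleteVerts B).coe.ConnectedComponent //
      Odd (Nat.card c.supp)},
      ∃ w ∈ B, ∃ v : ((⊤ : H.Subgraph).deleteVerts B).verts, M.Adj v w ∧ v ∈ c.1.supp :=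
    fun c => ConnectedComponent.odd_matches_node_outside hM ⟨c.1, c.2⟩
  choose w hwB v hv hvsupp using key
  have hinj : Function.Injective fun c => (⟨w c, hwB c⟩ : B) := by
    intro c1 c2 h
    simp only [Subtype.mk.injEq] at h
    have hv1 : M.Adj (w c1) (v c1) := (hv c1).symm
    have hv2 : M.Adj (w c1) (v c2) := h ▸ (hv c2).symm
    have := (hM.1 (hM.2 (w c1))).unique hv1 hv2
    have hveq : v c1 = v c2 := Subtype.ext this
    have h1 := (ConnectedComponent.mem_supp_iff _ _).mp (hvsupp c1)
    have h2 := (ConnectedComponent.mem_supp_iff _ _).mp (hveq ▸ hvsupp c2)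
    exact Subtype.ext (h1 ▸ h2)
  have hcongr : oddComponentCount H B =
      Nat.card {c : ((⊤ : H.Subgraph).deleteVerts B).coe.ConnectedComponent //
        Odd (Nat.card c.supp)} := by
    refine Nat.card_congr (φ.connectedComponentEquiv.subtypeEquiv fun c => ?_)
    rw [Nat.card_congr (ConnectedComponent.isoEquivSupp φ c)]
  rw [hcongr, ← Nat.card_coe_set_eq]
  exact Nat.card_le_card_of_injective _ hinj

private lemma aux_mono [Finite V] {H G : SimpleGraph V} (h : H ≤ G) (B : Set V) :
    oddComponentCount G B ≤ oddComponentCount H B := by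
  classical
  have hle : H.induce (Bᶜ : Set V) ≤ G.induce (Bᶜ : Set V) := fun a b hab => h hab
  have key : ∀ c' : {c : (G.induce (Bᶜ : Set V)).ConnectedComponent // Odd (Nat.card c.supp)},
      ∃ c : (H.induce (Bᶜ : Set V)).ConnectedComponent,
        c.supp ⊆ c'.1.supp ∧ Odd (Nat.card c.supp) := by
    intro c'
    have hodd := (ConnectedComponent.odd_oddComponents_ncard_subset_supp
      (G := H.induce (Bᶜ : Set V)) hle c'.1).mpr c'.2
    have hne : Nonempty ({c : (H.induce (Bᶜ : Set V)).ConnectedComponent |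
        c.supp ⊆ c'.1.supp ∧ Odd (Nat.card c.supp)} : Set _) :=
      by obtain ⟨c, hc⟩ := Set.nonempty_of_ncard_ne_zero hodd.pos.ne'; exact ⟨c, hc.2, hc.1⟩
    obtain ⟨c, hc⟩ := hne
    exact ⟨c, hc⟩
  choose d hd1 hd2 using key
  have hinj : Function.Injective fun c' => (⟨d c', hd2 c'⟩ :
      {c : (H.induce (Bᶜ : Set V)).ConnectedComponent // Odd (Nat.card c.supp)}) := by
    intro c1 c2 h
    simp only [Subtype.mk.injEq] at h
    obtain ⟨x, hx⟩ := (d c1).exists_rep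
    have hx1 : x ∈ (d c1).supp := hx
    have hm1 : x ∈ c1.1.supp := hd1 c1 hx1
    have hm2 : x ∈ c2.1.supp := hd1 c2 (h ▸ hx1)
    by_contra hne
    have hne' : c1.1 ≠ c2.1 := fun hh => hne (Subtype.ext hh)
    exact Set.disjoint_left.mp
      ((G.induce (Bᶜ : Set V)).pairwise_disjoint_supp_connectedComponent hne') hm1 hm2
  exact Nat.card_le_card_of_injective _ hinj

/-- every barrier of a graph `G ∈ ℰ(H)` is also a barrier of `H`. -/
theorem barrier_of_elemSupergraph_is_barrier [Finite V]
    (H G : SimpleGraph V) (hH : OneExtendable H)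
    (hG : G ∈ elemSupergraphs H) (B : Set V) (hB : IsBarrier G B) :
    IsBarrier H B := by
  obtain ⟨-, ⟨M, hM⟩, -⟩ := hH
  refine le_antisymm (aux_le_ncard hM B) ?_
  calc B.ncard = oddComponentCount G B := hB.symm
    _ ≤ oddComponentCount H B := aux_mono hG.1 B
end

section
/- Let H be a bipartite 1-extendable graph with bipartition classes X₁ and X₂. Then H has exactly two maximal barriers, namely X₁ and X₂. -/
open SimpleGraph

variable {V : Type}

section PM
variable {G : SimpleGraph V} {M : G.Subgraph}

noncomputable def pmP (hM : M.IsPerfectMatching) (v : V) : V :=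
  ((SimpleGraph.Subgraph.isPerfectMatching_iff.mp hM v).exists).choose

lemma pmP_adj (hM : M.IsPerfectMatching) (v : V) : M.Adj v (pmP hM v) :=
  ((SimpleGraph.Subgraph.isPerfectMatching_iff.mp hM v).exists).choose_spec

lemma pmP_eq (hM : M.IsPerfectMatching) {v w : V} (h : M.Adj v w) :
    pmP hM v = w := by
  obtain ⟨u, -, hu⟩ := SimpleGraph.Subgraph.isPerfectMatching_iff.mp hM v
  rw [hu _ (pmP_adj hM v), hu _ h]

lemma pmP_invol (hM : M.IsPerfectMatching) (v : V) : pmP hM (pmP hM v) = v :=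
  pmP_eq hM (pmP_adj hM v).symm

lemma pmP_inj (hM : M.IsPerfectMatching) : Function.Injective (pmP hM) := by
  intro a b h
  rw [← pmP_invol hM a, h, pmP_invol]

end PM

lemma walk_boundary {G : SimpleGraph V} (K : Set V) :
    ∀ {a b : V}, G.Walk a b → a ∈ K → b ∉ K → ∃ u v, u ∈ K ∧ v ∉ K ∧ G.Adj u v := by
  intro a b w
  induction w with
  | nil => intro h h'; exact absurd h h'
  | @cons u x b h p ih =>
    intro ha hb
    by_cases hx : x ∈ K
    · exact ih hx hb
    · exact ⟨u, x, ha, hx, h⟩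

lemma oddComponents_bot (W : Type) [Finite W] :
    Nat.card {c : (⊥ : SimpleGraph W).ConnectedComponent // Odd (Nat.card c.supp)} =
      Nat.card W := by
  have hinj : Function.Injective ((⊥ : SimpleGraph W).connectedComponentMk) := by
    intro a b h
    exact SimpleGraph.reachable_bot.mp (SimpleGraph.ConnectedComponent.exact h)
  have hsupp : ∀ c : (⊥ : SimpleGraph W).ConnectedComponent, Odd (Nat.card c.supp) := by
    intro c
    obtain ⟨v, rfl⟩ := c.exists_rep
    show Odd (Nat.card ((⊥ : SimpleGraph W).connectedComponentMk v).supp)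
    have hs : ((⊥ : SimpleGraph W).connectedComponentMk v).supp = {v} := by
      ext w
      simp only [SimpleGraph.ConnectedComponent.mem_supp_iff, Set.mem_singleton_iff]
      exact ⟨fun h => hinj h, fun h => by rw [h]⟩
    rw [hs, Nat.card_coe_set_eq, Set.ncard_singleton]
    exact odd_one
  have hsurj : Function.Surjective ((⊥ : SimpleGraph W).connectedComponentMk) :=
    fun c => c.exists_rep
  exact Nat.card_congr ((Equiv.subtypeUnivEquiv hsupp).trans
    (Equiv.ofBijective _ ⟨hinj, hsurj⟩).symm)

lemma oddComponentCount_of_compl_indep [Finite V] (H : SimpleGraph V) (S : Set V)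
    (h : ∀ u v : V, u ∈ Sᶜ → v ∈ Sᶜ → ¬ H.Adj u v) :
    Nat.card {c : (H.induce (Sᶜ : Set V)).ConnectedComponent // Odd (Nat.card c.supp)}
      = (Sᶜ : Set V).ncard := by
  have hbot : H.induce (Sᶜ : Set V) = ⊥ := by
    ext u v
    simp only [comap_adj, Function.Embedding.coe_subtype, bot_adj, iff_false]
    exact h u v u.2 v.2
  rw [hbot, oddComponents_bot, Nat.card_coe_set_eq]

lemma sum_nat_card_fiber {α β : Type*} [Finite α] [Fintype β] (f : α → β) (p : α → Prop) :
    ∑ b : β, Nat.card {a : α // f a = b ∧ p a} = Nat.card {a : α // p a} := by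
  classical
  have := Fintype.ofFinite α
  simp only [Nat.card_eq_fintype_card]
  rw [← Fintype.card_sigma]
  apply Fintype.card_congr
  exact (Equiv.sigmaCongrRight fun b =>
      (⟨fun a => ⟨⟨a.1, a.2.2⟩, a.2.1⟩, fun a => ⟨a.1.1, a.2, a.1.2⟩, fun _ => rfl,
        fun _ => rfl⟩ :
        {a : α // f a = b ∧ p a} ≃ {a : {x : α // p x} // f a.1 = b})).trans
    (Equiv.sigmaFiberEquiv fun (a : {x : α // p x}) => f a.1)

lemma card_subtype_congr {α : Type*} {P Q : α → Prop} (h : ∀ a, P a ↔ Q a) :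
    Nat.card {a // P a} = Nat.card {a // Q a} :=
  Nat.card_congr (Equiv.subtypeEquivRight h)

lemma nat_card_split {α : Type*} [Finite α] (q p : α → Prop) :
    Nat.card {a : α // q a} =
      Nat.card {a : α // q a ∧ p a} + Nat.card {a : α // q a ∧ ¬ p a} := by
  classical
  have h1 : {a : α | q a} = {a : α | q a ∧ p a} ∪ {a : α | q a ∧ ¬ p a} := by
    ext a; by_cases h : p a <;> simp [h]
  have h2 : Disjoint {a : α | q a ∧ p a} {a : α | q a ∧ ¬ p a} := by
    rw [Set.disjoint_left]; rintro a ⟨-, h⟩ ⟨-, h'⟩; exact h' h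
  have := Set.ncard_union_eq h2 (Set.toFinite _) (Set.toFinite _)
  simp only [← Nat.card_coe_set_eq, ← h1] at this
  exact this

def nbhd (H : SimpleGraph V) (X₁ A : Set V) : Set V := {u | u ∈ X₁ ∧ ∃ a ∈ A, H.Adj a u}

section Bip

variable (H : SimpleGraph V) (X₁ X₂ : Set V)

lemma compl_side (hdisj : X₁ ∩ X₂ = ∅) (hunion : X₁ ∪ X₂ = Set.univ) : X₁ᶜ = X₂ := by
  ext v
  simp only [Set.mem_compl_iff]
  constructor
  · intro hv
    have hv' : v ∈ X₁ ∪ X₂ := hunion ▸ Set.mem_univ v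
    exact hv'.resolve_left hv
  · intro hv hv1
    have : v ∈ X₁ ∩ X₂ := ⟨hv1, hv⟩
    simp [hdisj] at this

variable [Finite V]

omit [Finite V] in
lemma ncard_sides {M : H.Subgraph} (hM : M.IsPerfectMatching)
    (hdisj : X₁ ∩ X₂ = ∅)
    (hbip : ∀ u v : V, H.Adj u v → (u ∈ X₁ ∧ v ∈ X₂) ∨ (u ∈ X₂ ∧ v ∈ X₁)) :
    X₁.ncard = X₂.ncard := by
  have cross1 : ∀ v ∈ X₁, pmP hM v ∈ X₂ := by
    intro v hv
    rcases hbip v (pmP hM v) (M.adj_sub (pmP_adj hM v)) with ⟨-, h⟩ | ⟨h, -⟩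
    · exact h
    · exact absurd (Set.mem_inter hv h) (by simp [hdisj])
  have cross2 : ∀ v ∈ X₂, pmP hM v ∈ X₁ := by
    intro v hv
    rcases hbip v (pmP hM v) (M.adj_sub (pmP_adj hM v)) with ⟨h, -⟩ | ⟨-, h⟩
    · exact absurd (Set.mem_inter h hv) (by simp [hdisj])
    · exact h
  have himg : pmP hM '' X₁ = X₂ := by
    apply Set.Subset.antisymm
    · rintro _ ⟨v, hv, rfl⟩; exact cross1 v hv
    · intro w hw
      exact ⟨pmP hM w, cross2 w hw, pmP_invol hM w⟩
  rw [← himg, Set.ncard_image_of_injective _ (pmP_inj hM)]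

lemma side_barrier (hdisj : X₁ ∩ X₂ = ∅) (hunion : X₁ ∪ X₂ = Set.univ)
    (hbip : ∀ u v : V, H.Adj u v → (u ∈ X₁ ∧ v ∈ X₂) ∨ (u ∈ X₂ ∧ v ∈ X₁))
    {M : H.Subgraph} (hM : M.IsPerfectMatching) :
    IsBarrier H X₁ := by
  have hcompl := compl_side X₁ X₂ hdisj hunion
  have hindep : ∀ u v : V, u ∈ X₁ᶜ → v ∈ X₁ᶜ → ¬ H.Adj u v := by
    intro u v hu hv hadj
    rw [hcompl] at hu hv
    rcases hbip u v hadj with ⟨h, -⟩ | ⟨-, h⟩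
    · exact absurd (Set.mem_inter h hu) (by simp [hdisj])
    · exact absurd (Set.mem_inter h hv) (by simp [hdisj])
  show oddComponentCount H X₁ = X₁.ncard
  have h1 : oddComponentCount H X₁ = (X₁ᶜ : Set V).ncard :=
    oddComponentCount_of_compl_indep H X₁ hindep
  rw [h1, hcompl, ← ncard_sides H X₁ X₂ hM hdisj hbip]

lemma side_barrier_max (hdisj : X₁ ∩ X₂ = ∅) (hunion : X₁ ∪ X₂ = Set.univ)
    (hbip : ∀ u v : V, H.Adj u v → (u ∈ X₁ ∧ v ∈ X₂) ∨ (u ∈ X₂ ∧ v ∈ X₁))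
    {M : H.Subgraph} (hM : M.IsPerfectMatching)
    (T : Set V) (hT : IsBarrier H T) (hsub : X₁ ⊆ T) : T = X₁ := by
  have hcompl := compl_side X₁ X₂ hdisj hunion
  have hTc : Tᶜ ⊆ X₂ := by rw [← hcompl]; exact Set.compl_subset_compl.mpr hsub
  have hindep : ∀ u v : V, u ∈ Tᶜ → v ∈ Tᶜ → ¬ H.Adj u v := by
    intro u v hu hv hadj
    rcases hbip u v hadj with ⟨h, -⟩ | ⟨-, h⟩
    · exact absurd (Set.mem_inter h (hTc hu)) (by simp [hdisj])
    · exact absurd (Set.mem_inter h (hTc hv)) (by simp [hdisj])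
  have h1 : (Tᶜ : Set V).ncard = T.ncard := by
    have hbr : oddComponentCount H T = (Tᶜ : Set V).ncard :=
      oddComponentCount_of_compl_indep H T hindep
    unfold IsBarrier at hT
    rw [hbr] at hT
    exact hT
  have h2 : T.ncard + (Tᶜ : Set V).ncard = Nat.card V := Set.ncard_add_ncard_compl T
  have h3 : X₁.ncard + X₂.ncard = Nat.card V := by
    rw [← Set.ncard_union_eq (Set.disjoint_iff_inter_eq_empty.mpr hdisj)
      (Set.toFinite _) (Set.toFinite _), hunion, Set.ncard_univ]
  have h4 : X₁.ncard = X₂.ncard := ncard_sides H X₁ X₂ hM hdisj hbip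
  have h5 : X₁.ncard ≤ T.ncard := Set.ncard_le_ncard hsub (Set.toFinite _)
  exact (Set.eq_of_subset_of_ncard_le hsub (by omega) (Set.toFinite _)).symm

lemma hall_pm (hdisj : X₁ ∩ X₂ = ∅)
    (hbip : ∀ u v : V, H.Adj u v → (u ∈ X₁ ∧ v ∈ X₂) ∨ (u ∈ X₂ ∧ v ∈ X₁))
    {M : H.Subgraph} (hM : M.IsPerfectMatching) {A : Set V} (hA : A ⊆ X₂) :
    A.ncard ≤ (nbhd H X₁ A).ncard := by
  apply Set.ncard_le_ncard_of_injOn (pmP hM)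
  · intro a ha
    have hadj := M.adj_sub (pmP_adj hM a)
    rcases hbip a (pmP hM a) hadj with ⟨h, -⟩ | ⟨-, h⟩
    · exact absurd (Set.mem_inter h (hA ha)) (by simp [hdisj])
    · exact ⟨h, a, ha, hadj⟩
  · exact (pmP_inj hM).injOn

lemma hall_strict (hH : OneExtendable H) (hdisj : X₁ ∩ X₂ = ∅)
    (hunion : X₁ ∪ X₂ = Set.univ)
    (hbip : ∀ u v : V, H.Adj u v → (u ∈ X₁ ∧ v ∈ X₂) ∨ (u ∈ X₂ ∧ v ∈ X₁))
    {A : Set V} (hA : A ⊆ X₂) (hne : A.Nonempty) (hprop : A ≠ X₂) :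
    A.ncard + 1 ≤ (nbhd H X₁ A).ncard := by
  obtain ⟨hconn, ⟨M, hM⟩, hext⟩ := hH
  by_contra hcon
  push_neg at hcon
  have heq : (nbhd H X₁ A).ncard = A.ncard :=
    le_antisymm (by omega) (hall_pm H X₁ X₂ hdisj hbip hM hA)
  have himg : ∀ (M' : H.Subgraph), M'.IsPerfectMatching →
      ∀ hM' : M'.IsPerfectMatching, pmP hM' '' A = nbhd H X₁ A := by
    intro M' _ hM'
    have hsub : pmP hM' '' A ⊆ nbhd H X₁ A := by
      rintro _ ⟨a, ha, rfl⟩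
      have hadj := M'.adj_sub (pmP_adj hM' a)
      rcases hbip a (pmP hM' a) hadj with ⟨h, -⟩ | ⟨-, h⟩
      · exact absurd (Set.mem_inter h (hA ha)) (by simp [hdisj])
      · exact ⟨h, a, ha, hadj⟩
    have hle : (nbhd H X₁ A).ncard ≤ (pmP hM' '' A).ncard := by
      rw [Set.ncard_image_of_injective _ (pmP_inj hM'), heq]
    exact Set.eq_of_subset_of_ncard_le hsub hle (Set.toFinite _)
  obtain ⟨a, ha⟩ := hne
  obtain ⟨b, hb2, hbA⟩ : ∃ b, b ∈ X₂ ∧ b ∉ A := by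
    by_contra h
    push_neg at h
    exact hprop (Set.Subset.antisymm hA h)
  have haK : a ∈ A ∪ nbhd H X₁ A := Or.inl ha
  have hbK : b ∉ A ∪ nbhd H X₁ A := by
    rintro (h | ⟨h, -⟩)
    · exact hbA h
    · exact absurd (Set.mem_inter h hb2) (by simp [hdisj])
  obtain ⟨w⟩ := hconn.preconnected a b
  obtain ⟨u, v, huK, hvK, hadj⟩ := walk_boundary (A ∪ nbhd H X₁ A) w haK hbK
  rcases huK with hu | hu
  · rcases hbip u v hadj with ⟨h, -⟩ | ⟨-, h⟩
    · exact absurd (Set.mem_inter h (hA hu)) (by simp [hdisj])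
    · exact hvK (Or.inr ⟨h, u, hu, hadj⟩)
  · obtain ⟨hu1, a₀, ha₀, hadj₀⟩ := hu
    have hv2 : v ∈ X₂ := by
      rcases hbip u v hadj with ⟨-, h⟩ | ⟨h, -⟩
      · exact h
      · exact absurd (Set.mem_inter hu1 h) (by simp [hdisj])
    obtain ⟨M', hM', hMadj⟩ := hext hadj
    have humem : u ∈ pmP hM' '' A := by
      rw [himg M' hM' hM']
      exact ⟨hu1, a₀, ha₀, hadj₀⟩
    obtain ⟨a₁, ha₁, hpa⟩ := humem
    have h1 : pmP hM' u = a₁ := by rw [← hpa, pmP_invol]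
    have h2 : pmP hM' u = v := pmP_eq hM' hMadj
    exact hvK (Or.inl (by rw [← h2, h1]; exact ha₁))

end Bip

lemma barrier_subset_side [Finite V] (H : SimpleGraph V) (hH : OneExtendable H)
    (X₁ X₂ : Set V) (hdisj : X₁ ∩ X₂ = ∅) (hunion : X₁ ∪ X₂ = Set.univ)
    (hbip : ∀ u v : V, H.Adj u v → (u ∈ X₁ ∧ v ∈ X₂) ∨ (u ∈ X₂ ∧ v ∈ X₁))
    (S : Set V) (hS : IsBarrier H S) : S ∩ X₁ = ∅ ∨ S ∩ X₂ = ∅ := by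
  classical
  by_contra hcon
  push_neg at hcon
  obtain ⟨h1, h2⟩ := hcon
  obtain ⟨M, hM⟩ := hH.2.1
  set K : Set V := Sᶜ with hKdef
  haveI : Finite (H.induce K).ConnectedComponent :=
    Finite.of_surjective (H.induce K).connectedComponentMk fun c => c.exists_rep
  haveI fC : Fintype (H.induce K).ConnectedComponent := Fintype.ofFinite _
  set mkc : K → (H.induce K).ConnectedComponent := (H.induce K).connectedComponentMk
    with hmk
  set m1 : (H.induce K).ConnectedComponent → ℕ :=
    fun c => Nat.card {v : K // mkc v = c ∧ (v : V) ∈ X₁} with hm1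
  set m2 : (H.induce K).ConnectedComponent → ℕ :=
    fun c => Nat.card {v : K // mkc v = c ∧ (v : V) ∈ X₂} with hm2
  set δ : (H.induce K).ConnectedComponent → ℤ :=
    fun c => (m2 c : ℤ) - (m1 c : ℤ) with hδ
  have hx2 : ∀ v : V, v ∉ X₁ ↔ v ∈ X₂ := by
    intro v
    constructor
    · intro hv
      exact (hunion ▸ Set.mem_univ v : v ∈ X₁ ∪ X₂).resolve_left hv
    · intro hv hv1
      exact absurd (Set.mem_inter hv1 hv) (by simp [hdisj])
  have hsumY : ∀ Y : Set V,
      ∑ c, (Nat.card {v : K // mkc v = c ∧ (v : V) ∈ Y}) = (Y \ S).ncard := by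
    intro Y
    rw [sum_nat_card_fiber mkc (fun v => (v : V) ∈ Y), ← Nat.card_coe_set_eq]
    exact Nat.card_congr ⟨fun v => ⟨v.1.1, v.2, v.1.2⟩, fun v => ⟨⟨v.1, v.2.2⟩, v.2.1⟩,
      fun _ => rfl, fun _ => rfl⟩
  have hsum1 : ∑ c, m1 c = (X₁ \ S).ncard := by
    simp only [hm1]; exact hsumY X₁
  have hsum2 : ∑ c, m2 c = (X₂ \ S).ncard := by
    simp only [hm2]; exact hsumY X₂
  have hsupp : ∀ c : (H.induce K).ConnectedComponent,
      Nat.card c.supp = m1 c + m2 c := by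
    intro c
    have e1 : Nat.card c.supp = Nat.card {v : K // mkc v = c} :=
      card_subtype_congr fun v => SimpleGraph.ConnectedComponent.mem_supp_iff c v
    rw [e1, nat_card_split (fun v => mkc v = c) (fun v => (v : V) ∈ X₁)]
    congr 1
    exact card_subtype_congr fun v => and_congr_right fun _ => hx2 v
  have hScard : S.ncard = (S ∩ X₁).ncard + (S ∩ X₂).ncard := by
    rw [← Set.ncard_union_eq (by
        rw [Set.disjoint_left]
        rintro a ⟨-, ha1⟩ ⟨-, ha2⟩
        exact absurd (Set.mem_inter ha1 ha2) (by simp [hdisj]))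
      (Set.toFinite _) (Set.toFinite _), ← Set.inter_union_distrib_left, hunion,
      Set.inter_univ]
  have hodd : ((Finset.univ.filter fun c => Odd (m1 c + m2 c)).card : ℕ) = S.ncard := by
    unfold IsBarrier oddComponentCount at hS
    rw [← hKdef] at hS
    rw [← hS, Nat.card_eq_fintype_card, Fintype.card_subtype]
    congr 1
    ext c
    simp only [Finset.mem_filter, hsupp c]
  have hX12 : X₁.ncard = X₂.ncard := ncard_sides H X₁ X₂ hM hdisj hbip
  have hd1 : (X₁ ∩ S).ncard + (X₁ \ S).ncard = X₁.ncard :=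
    Set.ncard_inter_add_ncard_diff_eq_ncard X₁ S
  have hd2 : (X₂ ∩ S).ncard + (X₂ \ S).ncard = X₂.ncard :=
    Set.ncard_inter_add_ncard_diff_eq_ncard X₂ S
  have hc1 : (X₁ ∩ S).ncard = (S ∩ X₁).ncard := by rw [Set.inter_comm]
  have hc2 : (X₂ ∩ S).ncard = (S ∩ X₂).ncard := by rw [Set.inter_comm]
  have e1 : ∑ c, δ c = ((S ∩ X₁).ncard : ℤ) - ((S ∩ X₂).ncard : ℤ) := by
    simp only [hδ]
    rw [Finset.sum_sub_distrib]
    rw [← Nat.cast_sum, ← Nat.cast_sum, hsum1, hsum2]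
    omega
  have e2 : (((Finset.univ.filter fun c => Odd (m1 c + m2 c)).card : ℤ))
      ≤ ∑ c, |δ c| := by
    rw [← Finset.sum_boole]
    apply Finset.sum_le_sum
    intro c _
    by_cases hc : Odd (m1 c + m2 c)
    · rw [if_pos hc]
      have hmm := Nat.odd_iff.mp hc
      have hδ0 : δ c ≠ 0 := by
        simp only [hδ]
        intro h0
        omega
      rcases hδ0.lt_or_gt with h | h
      · rw [abs_of_neg h]; omega
      · rw [abs_of_pos h]; omega
    · rw [if_neg hc]
      exact abs_nonneg _
  have e4 : ((S ∩ X₁).ncard : ℤ) ≤ ∑ c, max (δ c) 0 := by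
    have h2m : ∀ c, 2 * max (δ c) 0 = |δ c| + δ c := by
      intro c
      rcases le_total (δ c) 0 with h | h
      · rw [max_eq_right h, abs_of_nonpos h]; ring
      · rw [max_eq_left h, abs_of_nonneg h]; ring
    have hsum : 2 * ∑ c, max (δ c) 0 = (∑ c, |δ c|) + ∑ c, δ c := by
      rw [Finset.mul_sum, ← Finset.sum_add_distrib]
      exact Finset.sum_congr rfl fun c _ => h2m c
    have e3 : ((S ∩ X₁).ncard : ℤ) + ((S ∩ X₂).ncard : ℤ) ≤ ∑ c, |δ c| := by
      have := e2
      rw [hodd] at this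
      rw [hScard] at this
      push_cast at this
      linarith
    linarith [e1, e3, hsum]
  -- the sets A and B
  set A : Set V := {v : V | ∃ h : v ∈ K, (v ∈ X₂ ∧ 0 < δ (mkc ⟨v, h⟩))} with hA
  set B : Set V := {v : V | ∃ h : v ∈ K, (v ∈ X₁ ∧ 0 < δ (mkc ⟨v, h⟩))} with hB
  have hcardgen : ∀ (Y : Set V),
      ({v : V | ∃ h : v ∈ K, (v ∈ Y ∧ 0 < δ (mkc ⟨v, h⟩))}.ncard : ℤ)
        = ∑ c, (if 0 < δ c then ((Nat.card {v : K // mkc v = c ∧ (v : V) ∈ Y}) : ℤ)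
            else 0) := by
    intro Y
    have e : {v : V | ∃ h : v ∈ K, (v ∈ Y ∧ 0 < δ (mkc ⟨v, h⟩))}.ncard
        = ∑ c, Nat.card {v : K // mkc v = c ∧ ((v : V) ∈ Y ∧ 0 < δ (mkc v))} := by
      rw [sum_nat_card_fiber mkc (fun v => (v : V) ∈ Y ∧ 0 < δ (mkc v)),
        ← Nat.card_coe_set_eq]
      exact Nat.card_congr ⟨fun v => ⟨⟨v.1, v.2.choose⟩, v.2.choose_spec⟩,
        fun w => ⟨w.1.1, w.1.2, w.2⟩, fun _ => rfl, fun _ => rfl⟩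
    have eper : ∀ c, Nat.card {v : K // mkc v = c ∧ ((v : V) ∈ Y ∧ 0 < δ (mkc v))}
        = if 0 < δ c then Nat.card {v : K // mkc v = c ∧ (v : V) ∈ Y} else 0 := by
      intro c
      by_cases hc : 0 < δ c
      · rw [if_pos hc]
        exact card_subtype_congr fun v =>
          ⟨fun h => ⟨h.1, h.2.1⟩, fun h => ⟨h.1, h.2, by rw [h.1]; exact hc⟩⟩
      · rw [if_neg hc]
        haveI : IsEmpty {v : K // mkc v = c ∧ ((v : V) ∈ Y ∧ 0 < δ (mkc v))} :=
          ⟨fun v => hc (by rw [← v.2.1]; exact v.2.2.2)⟩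
        exact Nat.card_of_isEmpty
    rw [e]
    rw [Nat.cast_sum]
    apply Finset.sum_congr rfl
    intro c _
    rw [eper c]
    split_ifs <;> simp
  have hAcard : (A.ncard : ℤ) = ∑ c, (if 0 < δ c then (m2 c : ℤ) else 0) := by
    rw [hA]
    exact hcardgen X₂
  have hBcard : (B.ncard : ℤ) = ∑ c, (if 0 < δ c then (m1 c : ℤ) else 0) := by
    rw [hB]
    exact hcardgen X₁
  have eAB : (A.ncard : ℤ) - B.ncard = ∑ c, max (δ c) 0 := by
    rw [hAcard, hBcard, ← Finset.sum_sub_distrib]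
    apply Finset.sum_congr rfl
    intro c _
    by_cases hc : 0 < δ c
    · rw [if_pos hc, if_pos hc, max_eq_left (le_of_lt hc)]
    · rw [if_neg hc, if_neg hc, max_eq_right (le_of_not_gt hc)]
      ring
  have hNSsub : nbhd H X₁ A ⊆ (S ∩ X₁) ∪ B := by
    rintro u ⟨hu1, a, haA, hadj⟩
    by_cases hus : u ∈ S
    · exact Or.inl ⟨hus, hu1⟩
    · right
      obtain ⟨haK, haX2, hapos⟩ := haA
      have huK : u ∈ K := hus
      have hadj' : (H.induce K).Adj ⟨a, haK⟩ ⟨u, huK⟩ := by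
        simp only [comap_adj, Function.Embedding.coe_subtype]
        exact hadj
      have hmkeq : mkc ⟨u, huK⟩ = mkc ⟨a, haK⟩ :=
        SimpleGraph.ConnectedComponent.connectedComponentMk_eq_of_adj hadj'.symm
      exact ⟨huK, hu1, by rw [hmkeq]; exact hapos⟩
  have hNScard : ((nbhd H X₁ A).ncard : ℤ) ≤ ((S ∩ X₁).ncard : ℤ) + B.ncard := by
    have hle1 := Set.ncard_le_ncard hNSsub (Set.toFinite _)
    have hle2 := Set.ncard_union_le (S ∩ X₁) B
    exact_mod_cast le_trans hle1 hle2
  have hApos : A.Nonempty := by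
    have hex : ∃ c, 0 < δ c := by
      by_contra hno
      push_neg at hno
      have hzero : ∑ c, max (δ c) 0 ≤ 0 :=
        Finset.sum_nonpos fun c _ => by rw [max_eq_right (hno c)]
      have hs1p : (0 : ℤ) < ((S ∩ X₁).ncard : ℤ) := by
        exact_mod_cast (Set.ncard_pos (Set.toFinite _)).mpr h1
      linarith [e4]
    obtain ⟨c, hc⟩ := hex
    have hm2pos : 0 < m2 c := by
      by_contra h
      push_neg at h
      simp only [hδ] at hc
      omega
    have hne : Nonempty {v : K // mkc v = c ∧ (v : V) ∈ X₂} := by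
      rw [hm2] at hm2pos
      exact (Nat.card_pos_iff.mp hm2pos).1
    obtain ⟨⟨v, hv⟩⟩ := hne
    exact ⟨v.1, v.2, hv.2, by rw [show (⟨v.1, v.2⟩ : K) = v from rfl, hv.1]; exact hc⟩
  have hAX2 : A ⊆ X₂ := by
    rintro v ⟨-, hv, -⟩
    exact hv
  have hAne : A ≠ X₂ := by
    obtain ⟨w, hwS, hwX2⟩ := h2
    intro heq
    have hw : w ∈ A := heq ▸ hwX2
    obtain ⟨hwK, -, -⟩ := hw
    exact hwK hwS
  have hstrict := hall_strict H X₁ X₂ hH hdisj hunion hbip hAX2 hApos hAne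
  have hstrictZ : (A.ncard : ℤ) + 1 ≤ ((nbhd H X₁ A).ncard : ℤ) := by
    exact_mod_cast hstrict
  linarith [e4, eAB, hNScard, hstrictZ]

/-- a bipartite 1-extendable graph has exactly two maximal barriers, namely
the two sides of the bipartition. -/
theorem bipartite_oneExtendable_maximal_barriers [Finite V]
    (H : SimpleGraph V) (hH : OneExtendable H)
    (X₁ X₂ : Set V) (hdisj : X₁ ∩ X₂ = ∅) (hunion : X₁ ∪ X₂ = Set.univ)
    (hbip : ∀ u v : V, H.Adj u v → (u ∈ X₁ ∧ v ∈ X₂) ∨ (u ∈ X₂ ∧ v ∈ X₁)) :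
    X₁ ≠ X₂ ∧ ∀ S : Set V, IsMaximalBarrier H S ↔ (S = X₁ ∨ S = X₂) := by
  obtain ⟨hconn, ⟨M, hM⟩, hext⟩ := hH
  have hH' : OneExtendable H := ⟨hconn, ⟨M, hM⟩, hext⟩
  have hbip' : ∀ u v : V, H.Adj u v → (u ∈ X₂ ∧ v ∈ X₁) ∨ (u ∈ X₁ ∧ v ∈ X₂) :=
    fun u v h => (hbip u v h).symm
  have hdisj' : X₂ ∩ X₁ = ∅ := by rw [Set.inter_comm]; exact hdisj
  have hunion' : X₂ ∪ X₁ = Set.univ := by rw [Set.union_comm]; exact hunion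
  constructor
  · intro heq
    obtain ⟨v⟩ := hconn.nonempty
    have hv : v ∈ X₁ ∪ X₂ := hunion ▸ Set.mem_univ v
    rcases hv with h | h
    · exact absurd (Set.mem_inter h (heq ▸ h)) (by simp [hdisj])
    · exact absurd (Set.mem_inter (heq ▸ h) h) (by simp [hdisj])
  · intro S
    constructor
    · rintro ⟨hSb, hSmax⟩
      rcases barrier_subset_side H hH' X₁ X₂ hdisj hunion hbip S hSb with h | h
      · right
        have hsub : S ⊆ X₂ := by
          intro v hv
          have hv2 : v ∈ X₁ ∪ X₂ := hunion ▸ Set.mem_univ v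
          rcases hv2 with h' | h'
          · exact absurd (Set.mem_inter hv h') (by simp [h])
          · exact h'
        exact (hSmax X₂ (side_barrier H X₂ X₁ hdisj' hunion' hbip' hM) hsub).symm
      · left
        have hsub : S ⊆ X₁ := by
          intro v hv
          have hv2 : v ∈ X₁ ∪ X₂ := hunion ▸ Set.mem_univ v
          rcases hv2 with h' | h'
          · exact h'
          · exact absurd (Set.mem_inter hv h') (by simp [h])
        exact (hSmax X₁ (side_barrier H X₁ X₂ hdisj hunion hbip hM) hsub).symm
    · rintro (h | h) <;> rw [h]
      · exact ⟨side_barrier H X₁ X₂ hdisj hunion hbip hM,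
          fun T hT hsub => side_barrier_max H X₁ X₂ hdisj hunion hbip hM T hT hsub⟩
      · exact ⟨side_barrier H X₂ X₁ hdisj' hunion' hbip' hM,
          fun T hT hsub => side_barrier_max H X₂ X₁ hdisj' hunion' hbip' hM T hT hsub⟩
end
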